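/- arXiv:1303.2804 — 2 statements merged into one kernel-verified Lean document; each statement's English description precedes it below -/
import Mathlib

section
/- If P is a positive definite symmetric solution of the Riccati equation SP + PS^T - 2μ P C^T C P + aI = 0 with a > 0, and λ ∈ ℂ satisfies Re(λ) ≥ μ, then the matrix S - λ P C^T C is Hurwitz (all eigenvalues have negative real part). -/
open Matrix

section RiccatiAux

variable {d : ℕ}

private lemma dot_star_self_eq {k : ℕ} (w : Fin k → ℂ) :
    star w ⬝ᵥ w = ((∑ i, Complex.normSq (w i) : ℝ) : ℂ) := by
  rw [dotProduct]
  push_cast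
  refine Finset.sum_congr rfl fun i _ => ?_
  rw [Pi.star_apply, Complex.normSq_eq_conj_mul_self]
  rfl

private lemma re_dot_star_self_nonneg {k : ℕ} (w : Fin k → ℂ) :
    0 ≤ (star w ⬝ᵥ w).re := by
  rw [dot_star_self_eq, Complex.ofReal_re]
  exact Finset.sum_nonneg fun i _ => Complex.normSq_nonneg _

private lemma im_dot_star_self {k : ℕ} (w : Fin k → ℂ) :
    (star w ⬝ᵥ w).im = 0 := by
  rw [dot_star_self_eq, Complex.ofReal_im]

private lemma re_dot_star_self_pos {k : ℕ} {w : Fin k → ℂ} (hw : w ≠ 0) :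
    0 < (star w ⬝ᵥ w).re := by
  rw [dot_star_self_eq, Complex.ofReal_re]
  obtain ⟨i, hi⟩ := Function.ne_iff.mp hw
  exact Finset.sum_pos' (fun j _ => Complex.normSq_nonneg _)
    ⟨i, Finset.mem_univ i, Complex.normSq_pos.mpr hi⟩

private lemma posdef_map_re {Q : Matrix (Fin d) (Fin d) ℝ} (hQ : Q.PosDef)
    {v : Fin d → ℂ} (hv : v ≠ 0) :
    0 < (star v ⬝ᵥ (Q.map Complex.ofReal) *ᵥ v).re := by
  classical
  set x : Fin d → ℝ := fun i => (v i).re with hx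
  set y : Fin d → ℝ := fun i => (v i).im with hy
  have hre : (star v ⬝ᵥ (Q.map Complex.ofReal) *ᵥ v).re
      = x ⬝ᵥ Q *ᵥ x + y ⬝ᵥ Q *ᵥ y := by
    simp only [dotProduct, mulVec, map_apply, Pi.star_apply, Finset.mul_sum]
    rw [Complex.re_sum, ← Finset.sum_add_distrib]
    refine Finset.sum_congr rfl fun i _ => ?_
    rw [Complex.re_sum, ← Finset.sum_add_distrib]
    refine Finset.sum_congr rfl fun j _ => ?_
    simp only [Complex.mul_re, Complex.conj_re, Complex.conj_im, Complex.ofReal_re,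
      Complex.ofReal_im, RingHom.coe_coe, starRingEnd_apply]
    simp [x, y, Complex.mul_re]
  have hxy : x ≠ 0 ∨ y ≠ 0 := by
    by_contra h
    push_neg at h
    apply hv
    funext i
    have h1 := congrFun h.1 i
    have h2 := congrFun h.2 i
    simp only [hx, hy, Pi.zero_apply] at h1 h2
    exact Complex.ext (by simpa using h1) (by simpa using h2)
  have hxpos : ∀ u : Fin d → ℝ, 0 ≤ u ⬝ᵥ Q *ᵥ u := by
    intro u
    have := hQ.posSemidef.dotProduct_mulVec_nonneg u
    simpa using this
  rw [hre]
  rcases hxy with h | h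
  · have := hQ.dotProduct_mulVec_pos h
    simp only [star_trivial] at this
    linarith [hxpos y]
  · have := hQ.dotProduct_mulVec_pos h
    simp only [star_trivial] at this
    linarith [hxpos x]

end RiccatiAux

/-- If `P ≻ 0` solves the Riccati equation `SP + PSᵀ - 2μ P CᵀC P + aI = 0` with
    `a > 0`, and `λ ∈ ℂ` has `Re λ ≥ μ`, then `S - λ P CᵀC` is Hurwitz. -/
theorem riccati_gives_hurwitz {d : ℕ}
    (S P : Matrix (Fin d) (Fin d) ℝ) (C : Matrix (Fin 1) (Fin d) ℝ)
    (μ a : ℝ) (hμ : 0 < μ) (ha : 0 < a)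
    (hP : P.PosDef)
    (hRic : S * P + P * Sᵀ - (2 * μ) • (P * Cᵀ * C * P) + a • (1 : Matrix (Fin d) (Fin d) ℝ) = 0)
    (lam : ℂ) (hlam : μ ≤ lam.re) :
    ∀ z ∈ spectrum ℂ
      ((S.map (Complex.ofReal)) - lam • ((P * Cᵀ * C).map (Complex.ofReal))),
      z.re < 0 := by
  classical
  intro z hz
  -- notations
  set Mc : Matrix (Fin d) (Fin d) ℂ :=
    (S.map (Complex.ofReal)) - lam • ((P * Cᵀ * C).map (Complex.ofReal)) with hMc
  -- eigenvector
  rw [spectrum.mem_iff] at hz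
  have hdetM : ((algebraMap ℂ (Matrix (Fin d) (Fin d) ℂ)) z - Mc).det = 0 := by
    by_contra h
    exact hz ((Matrix.isUnit_iff_isUnit_det _).mpr (Ne.isUnit h))
  obtain ⟨v, hv, hveq⟩ := (Matrix.exists_mulVec_eq_zero_iff).mpr hdetM
  have hMv : Mc *ᵥ v = z • v := by
    rw [Algebra.algebraMap_eq_smul_one, sub_mulVec, smul_mulVec, one_mulVec] at hveq
    have := sub_eq_zero.mp hveq
    exact this.symm
  -- P is invertible
  have hdet : IsUnit P.det := hP.det_pos.ne'.isUnit
  have hPinv : Invertible P := P.invertibleOfIsUnitDet hdet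
  set Q : Matrix (Fin d) (Fin d) ℝ := P⁻¹ with hQdef
  have hQP : Q * P = 1 := inv_mul_of_invertible P
  have hPQ : P * Q = 1 := mul_inv_of_invertible P
  have hQ : Q.PosDef := hP.inv
  have hPsym : Pᵀ = P := by
    rw [← conjTranspose_eq_transpose_of_trivial]; exact hP.1
  have hQsym : Qᵀ = Q := by
    rw [hQdef, transpose_nonsing_inv, hPsym]
  -- real key identity
  have e1 : Q * (S * P) * Q = Q * S := by
    simp only [← Matrix.mul_assoc]
    rw [mul_assoc, hPQ, mul_one]
  have e2 : Q * (P * Sᵀ) * Q = Sᵀ * Q := by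
    simp only [← Matrix.mul_assoc]
    rw [hQP, one_mul]
  have e3 : Q * (P * Cᵀ * C * P) * Q = Cᵀ * C := by
    simp only [← Matrix.mul_assoc]
    rw [hQP, Matrix.one_mul, Matrix.mul_assoc, hPQ, mul_one]
  have key : Q * S + Sᵀ * Q - (2 * μ) • (Cᵀ * C) + a • (Q * Q) = 0 := by
    have e : Q * (S * P + P * Sᵀ - (2 * μ) • (P * Cᵀ * C * P)
        + a • (1 : Matrix (Fin d) (Fin d) ℝ)) * Q = 0 := by
      rw [hRic, Matrix.mul_zero, Matrix.zero_mul]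
    calc Q * S + Sᵀ * Q - (2 * μ) • (Cᵀ * C) + a • (Q * Q)
        = Q * (S * P + P * Sᵀ - (2 * μ) • (P * Cᵀ * C * P)
            + a • (1 : Matrix (Fin d) (Fin d) ℝ)) * Q := by
          simp only [Matrix.mul_add, Matrix.add_mul, Matrix.mul_sub, Matrix.sub_mul,
            mul_smul_comm, smul_mul_assoc, Matrix.mul_one, e1, e2, e3]
      _ = 0 := e
  have key2 : Q * S + Sᵀ * Q = (2 * μ) • (Cᵀ * C) - a • (Q * Q) := by
    rw [← sub_eq_zero, ← key]; abel
  -- complexification helpers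
  have hm : ∀ {m n o : ℕ} (A : Matrix (Fin m) (Fin n) ℝ) (B : Matrix (Fin n) (Fin o) ℝ),
      (A * B).map Complex.ofReal = A.map Complex.ofReal * B.map Complex.ofReal := by
    intro m n o A B
    ext i j
    simp [Matrix.map_apply, Matrix.mul_apply]
  have hs : ∀ (r : ℝ) (A : Matrix (Fin d) (Fin d) ℝ),
      ((r • A).map Complex.ofReal) = (r : ℂ) • A.map Complex.ofReal := by
    intro r A
    ext i j
    simp [Matrix.map_apply]
  have hadd : ∀ (A B : Matrix (Fin d) (Fin d) ℝ),
      ((A + B).map Complex.ofReal) = A.map Complex.ofReal + B.map Complex.ofReal :=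
    fun A B => Matrix.map_add _ (fun x y => by push_cast; ring) A B
  have hsub : ∀ (A B : Matrix (Fin d) (Fin d) ℝ),
      ((A - B).map Complex.ofReal) = A.map Complex.ofReal - B.map Complex.ofReal :=
    fun A B => Matrix.map_sub _ (fun x y => by push_cast; ring) A B
  have hone : (1 : Matrix (Fin d) (Fin d) ℝ).map Complex.ofReal = 1 :=
    Matrix.map_one _ (by simp) (by simp)
  have hct : ∀ {m n : ℕ} (A : Matrix (Fin m) (Fin n) ℝ),
      (A.map Complex.ofReal)ᴴ = (Aᵀ).map Complex.ofReal := by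
    intro m n A
    ext i j
    simp [conjTranspose_apply, Matrix.map_apply, Complex.conj_ofReal]
  -- the two cancellation facts
  have hQcKc : Q.map Complex.ofReal * ((P * Cᵀ * C).map Complex.ofReal)
      = (Cᵀ * C).map Complex.ofReal := by
    rw [← hm Q (P * Cᵀ * C)]
    congr 1
    simp only [← Matrix.mul_assoc]
    rw [hQP, Matrix.one_mul]
  have hKcQc : ((Cᵀ * C * P).map Complex.ofReal) * Q.map Complex.ofReal
      = (Cᵀ * C).map Complex.ofReal := by
    rw [← hm (Cᵀ * C * P) Q]
    congr 1
    rw [Matrix.mul_assoc, hPQ, Matrix.mul_one]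
  -- conj transpose of Mc
  have hMcH : Mcᴴ = (Sᵀ).map Complex.ofReal
      - star lam • ((Cᵀ * C * P).map Complex.ofReal) := by
    rw [hMc, conjTranspose_sub, conjTranspose_smul, hct S, hct (P * Cᵀ * C)]
    congr 2
    rw [Matrix.transpose_mul, Matrix.transpose_mul, Matrix.transpose_transpose, hPsym,
      Matrix.mul_assoc]
  -- complexified key identity
  have hmapkey : Q.map Complex.ofReal * S.map Complex.ofReal
        + (Sᵀ).map Complex.ofReal * Q.map Complex.ofReal
      = ((2 * μ : ℝ) : ℂ) • ((Cᵀ * C).map Complex.ofReal)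
        - (a : ℂ) • (Q.map Complex.ofReal * Q.map Complex.ofReal) := by
    rw [← hm Q S, ← hm Sᵀ Q, ← hadd, key2, hsub, hs, hs, hm Q Q]
  have keyC : Q.map Complex.ofReal * Mc + Mcᴴ * Q.map Complex.ofReal
      = (((2 * μ : ℝ) : ℂ) - (lam + star lam)) • ((Cᵀ * C).map Complex.ofReal)
        - (a : ℂ) • (Q.map Complex.ofReal * Q.map Complex.ofReal) := by
    calc Q.map Complex.ofReal * Mc + Mcᴴ * Q.map Complex.ofReal
        = (Q.map Complex.ofReal * S.map Complex.ofReal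
            + (Sᵀ).map Complex.ofReal * Q.map Complex.ofReal)
          - (lam • ((Cᵀ * C).map Complex.ofReal)
            + star lam • ((Cᵀ * C).map Complex.ofReal)) := by
          rw [hMc, hMcH, Matrix.mul_sub, Matrix.sub_mul, mul_smul_comm, smul_mul_assoc,
            hQcKc, hKcQc]
          abel
      _ = _ := by
          rw [hmapkey, sub_smul, add_smul]
          abel
  -- the vector w = Qc v is nonzero
  have hw0 : Q.map Complex.ofReal *ᵥ v ≠ 0 := by
    intro h0
    apply hv
    have h1 : (P.map Complex.ofReal * Q.map Complex.ofReal) *ᵥ v = 0 := by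
      rw [← Matrix.mulVec_mulVec, h0, Matrix.mulVec_zero]
    rwa [← hm P Q, hPQ, hone, Matrix.one_mulVec] at h1
  -- scalar computations
  have hA : star v ⬝ᵥ ((Q.map Complex.ofReal * Mc) *ᵥ v)
      = z * (star v ⬝ᵥ (Q.map Complex.ofReal *ᵥ v)) := by
    rw [← Matrix.mulVec_mulVec, hMv, Matrix.mulVec_smul, dotProduct_smul, smul_eq_mul]
  have hB : star v ⬝ᵥ ((Mcᴴ * Q.map Complex.ofReal) *ᵥ v)
      = star z * (star v ⬝ᵥ (Q.map Complex.ofReal *ᵥ v)) := by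
    rw [← Matrix.mulVec_mulVec, Matrix.dotProduct_mulVec, ← Matrix.star_mulVec, hMv,
      star_smul, smul_dotProduct, smul_eq_mul]
  have hCd : star v ⬝ᵥ (((Cᵀ * C).map Complex.ofReal) *ᵥ v)
      = star ((C.map Complex.ofReal) *ᵥ v) ⬝ᵥ ((C.map Complex.ofReal) *ᵥ v) := by
    rw [show ((Cᵀ * C).map Complex.ofReal)
        = (C.map Complex.ofReal)ᴴ * (C.map Complex.ofReal) by rw [hm Cᵀ C, hct C]]
    rw [← Matrix.mulVec_mulVec, Matrix.dotProduct_mulVec, ← Matrix.star_mulVec]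
  have hDd : star v ⬝ᵥ ((Q.map Complex.ofReal * Q.map Complex.ofReal) *ᵥ v)
      = star (Q.map Complex.ofReal *ᵥ v) ⬝ᵥ (Q.map Complex.ofReal *ᵥ v) := by
    have hQcH : (Q.map Complex.ofReal)ᴴ = Q.map Complex.ofReal := by rw [hct Q, hQsym]
    rw [← Matrix.mulVec_mulVec, Matrix.dotProduct_mulVec]
    nth_rewrite 1 [← hQcH]
    rw [← Matrix.star_mulVec]
  have hmain := congrArg (fun A : Matrix (Fin d) (Fin d) ℂ => star v ⬝ᵥ (A *ᵥ v)) keyC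
  simp only [Matrix.add_mulVec, Matrix.sub_mulVec, Matrix.smul_mulVec,
    dotProduct_add, dotProduct_sub, dotProduct_smul, smul_eq_mul] at hmain
  rw [hA, hB, hCd, hDd] at hmain
  -- take real parts
  have hq : 0 < (star v ⬝ᵥ (Q.map Complex.ofReal *ᵥ v)).re := posdef_map_re hQ hv
  have hnC : 0 ≤ (star ((C.map Complex.ofReal) *ᵥ v) ⬝ᵥ ((C.map Complex.ofReal) *ᵥ v)).re :=
    re_dot_star_self_nonneg _
  have hnCim : (star ((C.map Complex.ofReal) *ᵥ v) ⬝ᵥ ((C.map Complex.ofReal) *ᵥ v)).im = 0 :=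
    im_dot_star_self _
  have hnQ : 0 < (star (Q.map Complex.ofReal *ᵥ v) ⬝ᵥ (Q.map Complex.ofReal *ᵥ v)).re :=
    re_dot_star_self_pos hw0
  have hnQim : (star (Q.map Complex.ofReal *ᵥ v) ⬝ᵥ (Q.map Complex.ofReal *ᵥ v)).im = 0 :=
    im_dot_star_self _
  have hre := congrArg Complex.re hmain
  simp only [Complex.add_re, Complex.mul_re, Complex.sub_re, Complex.sub_im, Complex.add_im,
    Complex.ofReal_re, Complex.ofReal_im, Complex.star_def, Complex.conj_re, Complex.conj_im,
    hnCim, hnQim, mul_zero, zero_mul, sub_zero, zero_sub] at hre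
  have h2 : 0 ≤ 2 * lam.re - 2 * μ := by linarith
  nlinarith [hq, hnC, hnQ, ha, hre,
    mul_nonneg h2 hnC, mul_pos ha hnQ]
end

section
/- If P solves the Riccati equation SP + PS^T - 2μ P C^T C P + aI = 0 with P symmetric positive definite and a > 0, and L_{22} ∈ ℝ^{(N-1)×(N-1)} has all eigenvalues with real part at least μ, then the matrix (I_{N-1} ⊗ S) - (L_{22} ⊗ K_0 C) with K_0 = P C^T is Hurwitz. -/
open Matrix Kronecker

section Helpers

open Complex

variable {n : Type*} [Fintype n] [DecidableEq n]

/-- Membership in the spectrum of a complex matrix via the determinant. -/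
lemma mem_spectrum_iff_det' (A : Matrix n n ℂ) (z : ℂ) :
    z ∈ spectrum ℂ A ↔ (z • (1 : Matrix n n ℂ) - A).det = 0 := by
  rw [spectrum.mem_iff, Algebra.algebraMap_eq_smul_one, Matrix.isUnit_iff_isUnit_det,
    isUnit_iff_ne_zero, not_not]

lemma exists_eigvec' {A : Matrix n n ℂ} {z : ℂ}
    (h : z ∈ spectrum ℂ A) : ∃ v, v ≠ 0 ∧ A *ᵥ v = z • v := by
  rw [mem_spectrum_iff_det'] at h
  obtain ⟨v, hv, h0⟩ := (Matrix.exists_mulVec_eq_zero_iff).mpr h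
  refine ⟨v, hv, ?_⟩
  rw [sub_mulVec, smul_mulVec, one_mulVec, sub_eq_zero] at h0
  exact h0.symm

lemma mem_spectrum_of_eigvec' {A : Matrix n n ℂ} {z : ℂ} {v : n → ℂ}
    (hv : v ≠ 0) (h : A *ᵥ v = z • v) : z ∈ spectrum ℂ A := by
  rw [mem_spectrum_iff_det', ← Matrix.exists_mulVec_eq_zero_iff]
  exact ⟨v, hv, by rw [sub_mulVec, smul_mulVec, one_mulVec, h, sub_self]⟩

lemma map_mul_oc {k l n : ℕ} (A : Matrix (Fin k) (Fin l) ℝ) (B : Matrix (Fin l) (Fin n) ℝ) :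
    (A * B).map Complex.ofReal = A.map Complex.ofReal * B.map Complex.ofReal := by
  ext i j; simp [Matrix.mul_apply]

lemma map_add_oc {k l : ℕ} (A B : Matrix (Fin k) (Fin l) ℝ) :
    (A + B).map Complex.ofReal = A.map Complex.ofReal + B.map Complex.ofReal := by
  ext i j; simp

lemma map_smul_oc {k l : ℕ} (r : ℝ) (A : Matrix (Fin k) (Fin l) ℝ) :
    (r • A).map Complex.ofReal = (r : ℂ) • A.map Complex.ofReal := by
  ext i j; simp

lemma map_one_oc {n : ℕ} :
    (1 : Matrix (Fin n) (Fin n) ℝ).map Complex.ofReal = 1 := by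
  ext i j; simp [Matrix.one_apply, apply_ite]

lemma conjTranspose_map_oc {k l : ℕ} (A : Matrix (Fin k) (Fin l) ℝ) :
    (A.map Complex.ofReal)ᴴ = Aᵀ.map Complex.ofReal := by
  ext i j; simp [Matrix.conjTranspose_apply, Complex.conj_ofReal]

/-- Real part of a complex quadratic form of a real matrix. -/
lemma re_quad {n : ℕ} (A : Matrix (Fin n) (Fin n) ℝ) (x : Fin n → ℂ) :
    (star x ⬝ᵥ (A.map Complex.ofReal) *ᵥ x).re =
      (fun i => (x i).re) ⬝ᵥ A *ᵥ (fun i => (x i).re) +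
      (fun i => (x i).im) ⬝ᵥ A *ᵥ (fun i => (x i).im) := by
  simp only [dotProduct, Matrix.mulVec, Matrix.map_apply, Pi.star_apply]
  rw [Complex.re_sum]
  simp_rw [Finset.mul_sum, Complex.re_sum]
  rw [← Finset.sum_add_distrib]
  refine Finset.sum_congr rfl fun i _ => ?_
  rw [← Finset.sum_add_distrib]
  refine Finset.sum_congr rfl fun j _ => ?_
  simp only [Complex.mul_re, Complex.mul_im, Complex.ofReal_re, Complex.ofReal_im,
    RCLike.star_def, Complex.conj_re, Complex.conj_im]
  ring

set_option maxHeartbeats 1000000 in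
/-- The single-block Lyapunov/Riccati argument: every eigenvalue of
`S - λ·(PCᵀC)` (over ℂ) has negative real part when `Re λ ≥ μ`. -/
lemma single_block_hurwitz {d : ℕ}
    (S P : Matrix (Fin d) (Fin d) ℝ) (C : Matrix (Fin 1) (Fin d) ℝ)
    (μ a : ℝ) (hμ : 0 < μ) (ha : 0 < a)
    (hP : P.PosDef)
    (hRic : S * P + P * Sᵀ - (2 * μ) • (P * Cᵀ * C * P) + a • (1 : Matrix (Fin d) (Fin d) ℝ) = 0)
    (lam : ℂ) (hlam : μ ≤ lam.re) {z : ℂ}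
    (hz : z ∈ spectrum ℂ
      (S.map Complex.ofReal - lam • ((P * Cᵀ * C).map Complex.ofReal))) :
    z.re < 0 := by
  set Sc := S.map Complex.ofReal with hSc
  set Bc := (P * Cᵀ * C).map Complex.ofReal with hBc
  set Pc := P.map Complex.ofReal with hPc
  set Qc := (P * Cᵀ * C * P).map Complex.ofReal with hQc
  set M1 := Sc - lam • Bc with hM1
  -- symmetric P
  have hPsym : Pᵀ = P := by
    ext i j
    rw [Matrix.transpose_apply]
    conv_rhs => rw [← hP.1]
    simp [Matrix.conjTranspose_apply]
  -- left eigenvector of M1ᴴ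
  have hdet : (z • (1 : Matrix (Fin d) (Fin d) ℂ) - M1).det = 0 :=
    (mem_spectrum_iff_det' _ _).mp hz
  have hdet2 : ((starRingEnd ℂ z) • (1 : Matrix (Fin d) (Fin d) ℂ) - M1ᴴ).det = 0 := by
    have : (starRingEnd ℂ z) • (1 : Matrix (Fin d) (Fin d) ℂ) - M1ᴴ =
        (z • (1 : Matrix (Fin d) (Fin d) ℂ) - M1)ᴴ := by
      simp [Matrix.conjTranspose_sub, Matrix.conjTranspose_smul, Matrix.conjTranspose_one]
    rw [this, Matrix.det_conjTranspose, hdet, star_zero]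
  obtain ⟨w, hw0, hw⟩ := (Matrix.exists_mulVec_eq_zero_iff).mpr hdet2
  rw [sub_mulVec, smul_mulVec, one_mulVec, sub_eq_zero] at hw
  have hMHw : M1ᴴ *ᵥ w = (starRingEnd ℂ z) • w := hw.symm
  -- Riccati rearranged
  have hR : S * P + P * Sᵀ =
      (2 * μ) • (P * Cᵀ * C * P) - a • (1 : Matrix (Fin d) (Fin d) ℝ) := by
    have h := hRic
    rw [sub_add, sub_eq_zero] at h
    exact h
  -- the Lyapunov identity over ℂ
  have hcT : Bcᴴ = (Cᵀ * C * P).map Complex.ofReal := by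
    rw [hBc, conjTranspose_map_oc]
    congr 1
    rw [Matrix.transpose_mul, Matrix.transpose_mul, Matrix.transpose_transpose, hPsym,
      Matrix.mul_assoc]
  have hMP : M1 * Pc = Sc * Pc - lam • Qc := by
    rw [hM1, Matrix.sub_mul, Matrix.smul_mul]
    congr 2
    rw [hBc, hPc, ← map_mul_oc]
  have hPM : Pc * M1ᴴ = (P * Sᵀ).map Complex.ofReal - (starRingEnd ℂ lam) • Qc := by
    have e1 : M1ᴴ = Sᵀ.map Complex.ofReal -
        (starRingEnd ℂ lam) • (Cᵀ * C * P).map Complex.ofReal := by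
      rw [hM1, Matrix.conjTranspose_sub, Matrix.conjTranspose_smul, hcT, hSc, conjTranspose_map_oc,
        starRingEnd_apply]
    rw [e1, Matrix.mul_sub, Matrix.mul_smul, hPc, ← map_mul_oc, ← map_mul_oc, hQc,
      show P * (Cᵀ * C * P) = P * Cᵀ * C * P by rw [← Matrix.mul_assoc, ← Matrix.mul_assoc]]
  have hEC : M1 * Pc + Pc * M1ᴴ =
      ((2 * μ - 2 * lam.re : ℝ) : ℂ) • Qc - (a : ℂ) • (1 : Matrix (Fin d) (Fin d) ℂ) := by
    rw [hMP, hPM]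
    have hmap : Sc * Pc + (P * Sᵀ).map Complex.ofReal =
        ((2 * μ : ℝ) : ℂ) • Qc - (a : ℂ) • (1 : Matrix (Fin d) (Fin d) ℂ) := by
      rw [hSc, hPc, ← map_mul_oc, ← map_add_oc, hR, hQc]
      rw [show ((2 * μ) • (P * Cᵀ * C * P) - a • (1 : Matrix (Fin d) (Fin d) ℝ)).map
            Complex.ofReal =
          ((2 * μ) • (P * Cᵀ * C * P)).map Complex.ofReal -
            (a • (1 : Matrix (Fin d) (Fin d) ℝ)).map Complex.ofReal by ext i j; simp]
      rw [map_smul_oc, map_smul_oc, map_one_oc]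
    have hlc : lam + starRingEnd ℂ lam = ((2 * lam.re : ℝ) : ℂ) := by
      rw [Complex.add_conj]
    calc Sc * Pc - lam • Qc + ((P * Sᵀ).map Complex.ofReal - starRingEnd ℂ lam • Qc)
        = (Sc * Pc + (P * Sᵀ).map Complex.ofReal) - (lam + starRingEnd ℂ lam) • Qc := by
          rw [add_smul]; abel
      _ = ((2 * μ : ℝ) : ℂ) • Qc - (a : ℂ) • (1 : Matrix (Fin d) (Fin d) ℂ) -
            ((2 * lam.re : ℝ) : ℂ) • Qc := by rw [hmap, hlc]
      _ = ((2 * μ - 2 * lam.re : ℝ) : ℂ) • Qc - (a : ℂ) • (1 : Matrix (Fin d) (Fin d) ℂ) := by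
          rw [show ((2 * μ - 2 * lam.re : ℝ) : ℂ) = ((2 * μ : ℝ) : ℂ) - ((2 * lam.re : ℝ) : ℂ)
            by push_cast; ring, sub_smul]
          abel
  -- scalar quantities
  set p := star w ⬝ᵥ Pc *ᵥ w with hp_def
  set q := star w ⬝ᵥ Qc *ᵥ w with hq_def
  set nn := star w ⬝ᵥ w with hnn_def
  -- LHS of the quadratic form identity
  have hvecMul : star w ᵥ* M1 = z • star w := by
    have h1 : star (M1ᴴ *ᵥ w) = star w ᵥ* M1 := by
      rw [Matrix.star_mulVec, Matrix.conjTranspose_conjTranspose]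
    rw [← h1, hMHw]
    simp [star_smul]
  have hLHS : star w ⬝ᵥ (M1 * Pc + Pc * M1ᴴ) *ᵥ w = z * p + (starRingEnd ℂ z) * p := by
    rw [Matrix.add_mulVec, dotProduct_add]
    congr 1
    · rw [← Matrix.mulVec_mulVec, Matrix.dotProduct_mulVec, hvecMul,
        smul_dotProduct, hp_def]
      rfl
    · rw [← Matrix.mulVec_mulVec, hMHw, Matrix.mulVec_smul, dotProduct_smul, hp_def]
      rfl
  have hRHS : star w ⬝ᵥ (((2 * μ - 2 * lam.re : ℝ) : ℂ) • Qc -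
      (a : ℂ) • (1 : Matrix (Fin d) (Fin d) ℂ)) *ᵥ w =
      ((2 * μ - 2 * lam.re : ℝ) : ℂ) * q - (a : ℂ) * nn := by
    rw [Matrix.sub_mulVec, dotProduct_sub, Matrix.smul_mulVec,
      Matrix.smul_mulVec, Matrix.one_mulVec, dotProduct_smul,
      dotProduct_smul, hq_def, hnn_def]
    rfl
  have hkey : z * p + (starRingEnd ℂ z) * p =
      ((2 * μ - 2 * lam.re : ℝ) : ℂ) * q - (a : ℂ) * nn := by
    rw [← hLHS, ← hRHS, hEC]
  -- real parts
  have hkey_re : 2 * z.re * p.re = (2 * μ - 2 * lam.re) * q.re - a * nn.re := by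
    have := congrArg Complex.re hkey
    simp only [Complex.add_re, Complex.mul_re, Complex.sub_re, Complex.ofReal_re,
      Complex.ofReal_im, Complex.conj_re, Complex.conj_im, RCLike.star_def] at this
    nlinarith [this]
  -- positivity facts
  have split_ne : ∀ x : Fin d → ℂ, x ≠ 0 →
      (fun i => (x i).re) ≠ 0 ∨ (fun i => (x i).im) ≠ 0 := by
    intro x hx
    by_contra h
    push_neg at h
    apply hx
    funext i
    have h1 := congrFun h.1 i
    have h2 := congrFun h.2 i
    simp only [Pi.zero_apply] at h1 h2 ⊢
    exact Complex.ext h1 h2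
  have hp_pos : 0 < p.re := by
    rw [hp_def, hPc, re_quad]
    have h1 : ∀ x : Fin d → ℝ, 0 ≤ x ⬝ᵥ P *ᵥ x := by
      intro x
      simpa using hP.posSemidef.dotProduct_mulVec_nonneg x
    have h2 : ∀ x : Fin d → ℝ, x ≠ 0 → 0 < x ⬝ᵥ P *ᵥ x := by
      intro x hx
      simpa using hP.dotProduct_mulVec_pos hx
    rcases split_ne w hw0 with h | h
    · have := h2 _ h
      have := h1 (fun i => (w i).im)
      linarith
    · have := h2 _ h
      have := h1 (fun i => (w i).re)
      linarith
  have hQps : (P * Cᵀ * C * P).PosSemidef := by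
    have h := Matrix.posSemidef_conjTranspose_mul_self (C * P)
    have he : (C * P)ᴴ * (C * P) = P * Cᵀ * C * P := by
      rw [Matrix.conjTranspose_mul, Matrix.conjTranspose_eq_transpose_of_trivial,
        Matrix.conjTranspose_eq_transpose_of_trivial, hPsym]
      rw [Matrix.mul_assoc, ← Matrix.mul_assoc, ← Matrix.mul_assoc]
    rwa [he] at h
  have hq_nonneg : 0 ≤ q.re := by
    rw [hq_def, hQc, re_quad]
    have h1 : ∀ x : Fin d → ℝ, 0 ≤ x ⬝ᵥ (P * Cᵀ * C * P) *ᵥ x := by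
      intro x
      simpa using hQps.dotProduct_mulVec_nonneg x
    have := h1 (fun i => (w i).re)
    have := h1 (fun i => (w i).im)
    linarith
  have hnn_pos : 0 < nn.re := by
    have : nn = ∑ i, ((Complex.normSq (w i) : ℝ) : ℂ) := by
      rw [hnn_def]
      simp only [dotProduct, Pi.star_apply, RCLike.star_def]
      refine Finset.sum_congr rfl fun i _ => ?_
      rw [← Complex.normSq_eq_conj_mul_self]
    rw [this, Complex.re_sum]
    simp only [Complex.ofReal_re]
    obtain ⟨i, hi⟩ : ∃ i, w i ≠ 0 := by
      by_contra h
      push_neg at h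
      exact hw0 (funext fun i => h i)
    exact Finset.sum_pos' (fun j _ => Complex.normSq_nonneg _)
      ⟨i, Finset.mem_univ i, Complex.normSq_pos.mpr hi⟩
  -- conclude
  have hneg : 2 * z.re * p.re < 0 := by
    have hfac : (2 * μ - 2 * lam.re) * q.re ≤ 0 :=
      mul_nonpos_of_nonpos_of_nonneg (by linarith) hq_nonneg
    nlinarith
  nlinarith [hp_pos, hneg]

end Helpers

set_option maxHeartbeats 1000000 in
/-- If `P ≻ 0` solves the Riccati equation and all eigenvalues of `L₂₂` have real
    part at least `μ`, then `(I ⊗ S) - (L₂₂ ⊗ K₀C)` with `K₀ = P Cᵀ` is Hurwitz. -/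
theorem kronecker_hurwitz {d m : ℕ}
    (S P : Matrix (Fin d) (Fin d) ℝ) (C : Matrix (Fin 1) (Fin d) ℝ)
    (μ a : ℝ) (hμ : 0 < μ) (ha : 0 < a)
    (hP : P.PosDef)
    (hRic : S * P + P * Sᵀ - (2 * μ) • (P * Cᵀ * C * P) + a • (1 : Matrix (Fin d) (Fin d) ℝ) = 0)
    (L22 : Matrix (Fin m) (Fin m) ℝ)
    (hL22 : ∀ lam ∈ spectrum ℂ (L22.map (Complex.ofReal)), μ ≤ lam.re) :
    ∀ z ∈ spectrum ℂ
      ((((1 : Matrix (Fin m) (Fin m) ℝ) ⊗ₖ S) - (L22 ⊗ₖ (P * Cᵀ * C))).map (Complex.ofReal)),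
      z.re < 0 := by
  intro z hz
  classical
  set Sc := S.map Complex.ofReal with hSc
  set Bc := (P * Cᵀ * C).map Complex.ofReal with hBc
  set Nc := L22.map Complex.ofReal with hNc
  -- eigenvector of the big matrix
  obtain ⟨v, hv0, hv⟩ := exists_eigvec' hz
  -- entrywise key equation
  have hkey : ∀ (i : Fin m) (k : Fin d),
      (∑ l, Sc k l * v (i, l)) - (∑ j, Nc i j * ∑ l, Bc k l * v (j, l)) = z * v (i, k) := by
    intro i k
    have h := congrFun hv (i, k)
    simp only [Matrix.mulVec, dotProduct, Pi.smul_apply, smul_eq_mul,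
      Fintype.sum_prod_type, Matrix.map_apply, Matrix.sub_apply,
      Matrix.kroneckerMap_apply] at h
    rw [← h]
    have hterm : ∀ (j : Fin m) (l : Fin d),
        (((1 : Matrix (Fin m) (Fin m) ℝ) i j * S k l - L22 i j * (P * Cᵀ * C) k l : ℝ) : ℂ) *
          v (j, l) =
        (((1 : Matrix (Fin m) (Fin m) ℝ) i j : ℝ) : ℂ) * (Sc k l * v (j, l)) -
          Nc i j * (Bc k l * v (j, l)) := by
      intro j l
      simp only [hSc, hBc, hNc, Matrix.map_apply]
      push_cast
      ring
    simp_rw [hterm, Finset.sum_sub_distrib]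
    congr 1
    · have e1 : ∀ j : Fin m,
          ∑ l, (((1 : Matrix (Fin m) (Fin m) ℝ) i j : ℝ) : ℂ) * (Sc k l * v (j, l)) =
          (((1 : Matrix (Fin m) (Fin m) ℝ) i j : ℝ) : ℂ) * ∑ l, Sc k l * v (j, l) :=
        fun j => (Finset.mul_sum _ _ _).symm
      simp_rw [e1]
      rw [Finset.sum_eq_single i]
      · simp [Matrix.one_apply]
      · intro j _ hj
        rw [Matrix.one_apply_ne (Ne.symm hj)]
        simp
      · intro h'
        exact absurd (Finset.mem_univ i) h'
    · refine Finset.sum_congr rfl fun j _ => ?_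
      rw [Finset.mul_sum]
  -- reshape into matrix X
  set X : Matrix (Fin d) (Fin m) ℂ := Matrix.of (fun k i => v (i, k)) with hX
  have hXapp : ∀ (k : Fin d) (i : Fin m), X k i = v (i, k) := fun _ _ => rfl
  have hXrel : Sc * X - Bc * X * Ncᵀ = z • X := by
    ext k i
    simp only [Matrix.sub_apply, Matrix.smul_apply, smul_eq_mul]
    have e1 : (Sc * X) k i = ∑ l, Sc k l * v (i, l) := by
      rw [Matrix.mul_apply]
      exact Finset.sum_congr rfl fun l _ => by rw [hXapp]
    have e2 : (Bc * X * Ncᵀ) k i = ∑ j, Nc i j * ∑ l, Bc k l * v (j, l) := by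
      rw [Matrix.mul_apply]
      refine Finset.sum_congr rfl fun j _ => ?_
      rw [Matrix.transpose_apply, mul_comm ((Bc * X) k j) (Nc i j)]
      congr 1
    rw [e1, e2, hXapp, hkey i k]
  -- generalized eigenvector machinery
  set A : Module.End ℂ (Fin m → ℂ) := Matrix.mulVecLin Ncᵀ with hA
  obtain ⟨lam, u, hu_mem, hu_ne⟩ : ∃ lam u, u ∈ A.maxGenEigenspace lam ∧ X *ᵥ u ≠ 0 := by
    by_contra h
    push_neg at h
    have hle : (⨆ lam, A.maxGenEigenspace lam) ≤ LinearMap.ker (Matrix.mulVecLin X) := by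
      refine iSup_le fun lam u hu => ?_
      simp only [LinearMap.mem_ker, Matrix.mulVecLin_apply]
      exact h lam u hu
    rw [Module.End.iSup_maxGenEigenspace_eq_top A] at hle
    obtain ⟨⟨i, k⟩, hik⟩ : ∃ p, v p ≠ 0 := by
      by_contra h'
      push_neg at h'
      exact hv0 (funext h')
    have h1 : (Pi.single i 1 : Fin m → ℂ) ∈ LinearMap.ker (Matrix.mulVecLin X) :=
      hle Submodule.mem_top
    simp only [LinearMap.mem_ker, Matrix.mulVecLin_apply] at h1
    have h2 := congrFun h1 k
    rw [Matrix.mulVec_single_one] at h2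
    simp only [Pi.zero_apply, mul_one] at h2
    exact hik h2
  rw [Module.End.mem_maxGenEigenspace] at hu_mem
  obtain ⟨kk, hkk⟩ := hu_mem
  set D : Module.End ℂ (Fin m → ℂ) := A - lam • 1 with hD
  set PP : ℕ → Prop := fun j => X *ᵥ ((D ^ j) u) ≠ 0 with hPP
  have hP0 : PP 0 := by simpa [hPP] using hu_ne
  have hPk : ¬ PP kk := by
    simp only [hPP, hkk, not_not, Matrix.mulVec_zero]
  have hrspec : PP (Nat.findGreatest PP kk) := Nat.findGreatest_spec (Nat.zero_le kk) hP0
  set r := Nat.findGreatest PP kk with hr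
  have hrlt : r < kk := by
    rcases lt_or_eq_of_le (Nat.findGreatest_le (P := PP) kk) with h | h
    · exact h
    · exact absurd (h ▸ hrspec) hPk
  have hrsucc : ¬ PP (r + 1) :=
    Nat.findGreatest_is_greatest (Nat.lt_succ_of_le le_rfl) hrlt
  set w := (D ^ r) u with hwdef
  set y := X *ᵥ w with hy
  have hy0 : y ≠ 0 := hrspec
  have hDw : X *ᵥ (D w) = 0 := by
    have hDww : D w = (D ^ (r + 1)) u := by
      rw [pow_succ', Module.End.mul_apply]
    rw [hDww]
    exact not_not.mp hrsucc
  have hNw : Ncᵀ *ᵥ w = lam • w + D w := by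
    have h1 : D w = Ncᵀ *ᵥ w - lam • w := by
      simp [hD, hA, LinearMap.sub_apply, LinearMap.smul_apply, Module.End.one_apply,
        Matrix.mulVecLin_apply, Matrix.mulVec_transpose]
    rw [h1]
    abel
  have heig : (Sc - lam • Bc) *ᵥ y = z • y := by
    have h := congrArg (fun M => M *ᵥ w) hXrel
    simp only [Matrix.sub_mulVec] at h
    rw [← Matrix.mulVec_mulVec, ← Matrix.mulVec_mulVec, ← Matrix.mulVec_mulVec,
      Matrix.smul_mulVec, hNw, Matrix.mulVec_add, Matrix.mulVec_smul, hDw, add_zero,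
      Matrix.mulVec_smul] at h
    rw [Matrix.sub_mulVec, Matrix.smul_mulVec]
    exact h
  have hzspec : z ∈ spectrum ℂ (Sc - lam • Bc) := mem_spectrum_of_eigvec' hy0 heig
  have hlam_spec : lam ∈ spectrum ℂ Nc := by
    have hw0 : w ≠ 0 := fun h => hy0 (by rw [hy, h, Matrix.mulVec_zero])
    have hmax : w ∈ A.maxGenEigenspace lam := by
      rw [Module.End.mem_maxGenEigenspace]
      refine ⟨kk - r, ?_⟩
      have : ((A - lam • 1) ^ (kk - r)) ((D ^ r) u) = ((D ^ (kk - r)) * (D ^ r)) u := rfl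
      rw [hwdef, this, ← pow_add, Nat.sub_add_cancel hrlt.le, hkk]
    have hUE : A.HasUnifEigenvalue lam ⊤ := by
      rw [Module.End.HasUnifEigenvalue, Submodule.ne_bot_iff]
      exact ⟨w, hmax, hw0⟩
    have hE : A.HasEigenvalue lam := hUE.lt (by norm_num)
    obtain ⟨uu, huu⟩ := hE.exists_hasEigenvector
    have heq : Ncᵀ *ᵥ uu = lam • uu := huu.apply_eq_smul
    have hsp : lam ∈ spectrum ℂ Ncᵀ := mem_spectrum_of_eigvec' huu.2 heq
    rw [mem_spectrum_iff_det'] at hsp ⊢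
    rw [← Matrix.det_transpose, Matrix.transpose_sub, Matrix.transpose_smul,
      Matrix.transpose_one]
    exact hsp
  exact single_block_hurwitz S P C μ a hμ ha hP hRic lam (hL22 lam hlam_spec) hzspec
end
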